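/- For n ≥ 1 and the polynomial P_n(x) = i((x-i)/2)^{n+1} - i((x+i)/2)^{n+1}, at the zero x_{n,k} = cot(kπ/(n+1)) one has x_{n,k}^2 + 1 = 1/sin^2(kπ/(n+1)) and P_{n-1}(x_{n,k}) = (-1)^{k-1} / (2 sin(kπ/(n+1)))^{n-1}, for k = 1, ..., n. -/

import Mathlib

theorem stmt9 (n : ℕ) (hn : 1 ≤ n) (k : ℕ) (hk1 : 1 ≤ k) (hkn : k ≤ n) :
    (Real.cot (k * Real.pi / (n+1)))^2 + 1 = 1 / (Real.sin (k * Real.pi / (n+1)))^2 ∧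
    Complex.I * (((Real.cot (k * Real.pi / (n+1)) : ℂ) - Complex.I)/2)^n
      - Complex.I * (((Real.cot (k * Real.pi / (n+1)) : ℂ) + Complex.I)/2)^n
      = (((-1:ℝ))^(k-1) / (2 * Real.sin (k * Real.pi / (n+1)))^(n-1) : ℝ) := by
  have hπ := Real.pi_pos
  set θ : ℝ := k * Real.pi / (n+1) with hθdef
  have hn1 : (0:ℝ) < (n:ℝ) + 1 := by positivity
  have hkpos : (0:ℝ) < k := by exact_mod_cast hk1
  have hθpos : 0 < θ := by
    apply div_pos _ hn1
    positivity
  have hθlt : θ < Real.pi := by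
    rw [hθdef, div_lt_iff₀ hn1]
    have hk : (k:ℝ) ≤ n := by exact_mod_cast hkn
    nlinarith
  have hs : 0 < Real.sin θ := Real.sin_pos_of_pos_of_lt_pi hθpos hθlt
  have hsne : Real.sin θ ≠ 0 := ne_of_gt hs
  refine ⟨?_, ?_⟩
  · rw [Real.cot_eq_cos_div_sin]
    field_simp
    exact Real.cos_sq_add_sin_sq θ
  · obtain ⟨m, rfl⟩ : ∃ m, n = m + 1 := ⟨n - 1, (Nat.succ_pred_eq_of_pos hn).symm⟩
    obtain ⟨j, rfl⟩ : ∃ j, k = j + 1 := ⟨k - 1, (Nat.succ_pred_eq_of_pos hk1).symm⟩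
    have hsC : (Real.sin θ : ℂ) ≠ 0 := by exact_mod_cast hsne
    have hCs : Complex.sin (θ:ℂ) ≠ 0 := by
      rw [← Complex.ofReal_sin]; exact_mod_cast hsne
    have hcot : (Real.cot θ : ℂ) = (Real.cos θ : ℂ) / (Real.sin θ : ℂ) := by
      rw [Real.cot_eq_cos_div_sin]; push_cast; ring
    have e1 : ((Real.cot θ : ℂ) - Complex.I)/2
        = Complex.exp (-(θ:ℂ) * Complex.I) / (2 * (Real.sin θ : ℂ)) := by
      rw [Complex.exp_mul_I, hcot, Complex.cos_neg, Complex.sin_neg,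
        ← Complex.ofReal_cos, ← Complex.ofReal_sin]
      field_simp [hCs]
      ring
    have e2 : ((Real.cot θ : ℂ) + Complex.I)/2
        = Complex.exp ((θ:ℂ) * Complex.I) / (2 * (Real.sin θ : ℂ)) := by
      rw [Complex.exp_mul_I, hcot, ← Complex.ofReal_cos, ← Complex.ofReal_sin]
      field_simp [hCs]
    have main : ∀ w : ℂ, Complex.I * Complex.exp (-w * Complex.I)
        - Complex.I * Complex.exp (w * Complex.I) = 2 * Complex.sin w := by
      intro w
      rw [Complex.exp_mul_I, Complex.exp_mul_I, Complex.cos_neg, Complex.sin_neg]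
      linear_combination (-2 * Complex.sin w) * Complex.I_sq
    have hnθ : ((m + 1 : ℕ) : ℝ) * θ = (j + 1 : ℕ) * Real.pi - θ := by
      rw [hθdef]
      field_simp [hCs]
      ring
    have hsinval : Real.sin (((m + 1 : ℕ) : ℝ) * θ) = (-1)^j * Real.sin θ := by
      rw [hnθ, Real.sin_nat_mul_pi_sub]
      push_cast
      ring
    rw [e1, e2, div_pow, div_pow, ← mul_div_assoc, ← mul_div_assoc, div_sub_div_same,
      ← Complex.exp_nat_mul, ← Complex.exp_nat_mul]
    have r1 : ((m+1:ℕ):ℂ) * (-(θ:ℂ) * Complex.I) = -(((m+1:ℕ):ℝ) * θ : ℝ) * Complex.I := by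
      push_cast; ring
    have r2 : ((m+1:ℕ):ℂ) * ((θ:ℂ) * Complex.I) = ((((m+1:ℕ):ℝ) * θ : ℝ) : ℂ) * Complex.I := by
      push_cast; ring
    rw [r1, r2, main, ← Complex.ofReal_sin, hsinval]
    simp only [Nat.add_sub_cancel]
    push_cast
    field_simp
    ring
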